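/- With notation as in the definition of $\tau$ and $I$ for fixed $\beta > 1$, the function $J(x) = x\,I(x^{\beta-1})$ is nonnegative and strictly convex on $(0,\infty)$ with $J(1)=0$. In particular, its derivative satisfies $J'(x) = R(x^{\beta-1})$ with $R(x) = (\beta-1)x\tau(x) + I(x)$, and $R'(x) = \tau'(x)\,r(\tau(x))$ where $r(u) = \int_1^\infty \frac{(y^\beta + u)\,dy}{((\beta-1)^{-1}y^\beta - u)^2} > 0$ for all $u < 1/(\beta-1)$. -/

import Mathlib

open MeasureTheory Filter Topology Set

lemma denom_lb {β t y : ℝ} (hβ : 1 < β) (ht : t < (β-1)⁻¹) (hy : 1 ≤ y) :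
    ((β-1)⁻¹ - max t 0) * y ^ β ≤ (β-1)⁻¹ * y ^ β - t := by
  have hyβ : 1 ≤ y ^ β := Real.one_le_rpow hy (by linarith)
  rcases le_or_gt t 0 with h | h
  · rw [max_eq_right h]; nlinarith
  · rw [max_eq_left h.le]; nlinarith

lemma K_pos {β t : ℝ} (hβ : 1 < β) (ht : t < (β-1)⁻¹) : 0 < (β-1)⁻¹ - max t 0 := by
  rcases le_or_gt t 0 with h | h
  · rw [max_eq_right h]; simp only [sub_zero]; exact inv_pos.2 (by linarith)
  · rw [max_eq_left h.le]; linarith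

lemma denom_pos {β t y : ℝ} (hβ : 1 < β) (ht : t < (β-1)⁻¹) (hy : 1 ≤ y) :
    0 < (β-1)⁻¹ * y ^ β - t := by
  have h1 := denom_lb hβ ht hy
  have h2 := K_pos hβ ht
  have hyβ : 1 ≤ y ^ β := Real.one_le_rpow hy (by linarith)
  nlinarith

lemma cont_denom {β t : ℝ} (hβ : 1 < β) :
    Continuous (fun y : ℝ => (β-1)⁻¹ * y ^ β - t) :=
  (continuous_const.mul (Real.continuous_rpow_const (by linarith))).sub continuous_const

lemma cont_inv {β t : ℝ} (hβ : 1 < β) (ht : t < (β-1)⁻¹) :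
    ContinuousOn (fun y : ℝ => ((β-1)⁻¹ * y ^ β - t)⁻¹) (Ici 1) :=
  ContinuousOn.inv₀ (cont_denom hβ).continuousOn (fun y hy => (denom_pos hβ ht hy).ne')

-- integrability of  C * y^(-p) dominating functions
lemma int_rpow {p : ℝ} (hp : 1 < p) : IntegrableOn (fun y : ℝ => y ^ (-p)) (Ici 1) := by
  rw [integrableOn_Ici_iff_integrableOn_Ioi]
  · exact integrableOn_Ioi_rpow_of_lt (by linarith) one_pos

lemma int_inv {β t : ℝ} (hβ : 1 < β) (ht : t < (β-1)⁻¹) :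
    IntegrableOn (fun y : ℝ => ((β-1)⁻¹ * y ^ β - t)⁻¹) (Ici 1) := by
  have hK := K_pos hβ ht
  apply Integrable.mono' (((int_rpow hβ).const_mul (((β-1)⁻¹ - max t 0))⁻¹ : _))
    ((cont_inv hβ ht).aestronglyMeasurable measurableSet_Ici)
  · filter_upwards [ae_restrict_mem measurableSet_Ici] with y hy
    have h1 := denom_lb hβ ht hy
    have h2 := denom_pos hβ ht hy
    have hy0 : (0:ℝ) < y := lt_of_lt_of_le one_pos hy
    have hyβ : 0 < y ^ β := Real.rpow_pos_of_pos hy0 β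
    rw [Real.norm_eq_abs, abs_of_pos (inv_pos.2 h2)]
    rw [Real.rpow_neg hy0.le, ← mul_inv]
    exact inv_anti₀ (by positivity) h1

lemma cont_inv_sq {β t : ℝ} (hβ : 1 < β) (ht : t < (β-1)⁻¹) :
    ContinuousOn (fun y : ℝ => (((β-1)⁻¹ * y ^ β - t)⁻¹) ^ 2) (Ici 1) :=
  (cont_inv hβ ht).pow 2

lemma int_inv_sq {β t : ℝ} (hβ : 1 < β) (ht : t < (β-1)⁻¹) :
    IntegrableOn (fun y : ℝ => (((β-1)⁻¹ * y ^ β - t)⁻¹) ^ 2) (Ici 1) := by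
  have hK := K_pos hβ ht
  apply Integrable.mono' (((int_rpow (p := 2*β) (by linarith)).const_mul
      ((((β-1)⁻¹ - max t 0)^2))⁻¹ : _))
    ((cont_inv_sq hβ ht).aestronglyMeasurable measurableSet_Ici)
  · filter_upwards [ae_restrict_mem measurableSet_Ici] with y hy
    have h1 := denom_lb hβ ht hy
    have h2 := denom_pos hβ ht hy
    have hy0 : (0:ℝ) < y := lt_of_lt_of_le one_pos hy
    have hyβ : 0 < y ^ β := Real.rpow_pos_of_pos hy0 β
    have key : (((β-1)⁻¹ - max t 0) * y ^ β)^2 ≤ ((β-1)⁻¹ * y ^ β - t)^2 := by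
      apply pow_le_pow_left₀ (by positivity) h1
    rw [Real.norm_eq_abs, abs_of_pos (pow_pos (inv_pos.2 h2) 2), inv_pow]
    calc (((β-1)⁻¹ * y ^ β - t)^2)⁻¹ ≤ ((((β-1)⁻¹ - max t 0) * y ^ β)^2)⁻¹ :=
          inv_anti₀ (by positivity) key
      _ = (((β-1)⁻¹ - max t 0)^2)⁻¹ * y ^ (-(2*β)) := by
          rw [mul_pow, mul_inv, Real.rpow_neg hy0.le]
          congr 1
          rw [← Real.rpow_natCast (y ^ β) 2, ← Real.rpow_mul hy0.le]
          norm_num [mul_comm]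

lemma cont_rint {β u : ℝ} (hβ : 1 < β) (hu : u < (β-1)⁻¹) :
    ContinuousOn (fun y : ℝ => (y ^ β + u) * (((β-1)⁻¹ * y ^ β - u)⁻¹) ^ 2) (Ici 1) :=
  (((Real.continuous_rpow_const (by linarith : (0:ℝ) ≤ β)).add
    continuous_const).continuousOn).mul (cont_inv_sq hβ hu)

lemma int_rint {β u : ℝ} (hβ : 1 < β) (hu : u < (β-1)⁻¹) :
    IntegrableOn (fun y : ℝ => (y ^ β + u) * (((β-1)⁻¹ * y ^ β - u)⁻¹) ^ 2) (Ici 1) := by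
  have hK := K_pos hβ hu
  apply Integrable.mono' (((int_rpow hβ).const_mul
      ((1 + |u|) * ((((β-1)⁻¹ - max u 0)^2))⁻¹) : _))
    ((cont_rint hβ hu).aestronglyMeasurable measurableSet_Ici)
  · filter_upwards [ae_restrict_mem measurableSet_Ici] with y hy
    have h1 := denom_lb hβ hu hy
    have h2 := denom_pos hβ hu hy
    have hy0 : (0:ℝ) < y := lt_of_lt_of_le one_pos hy
    have hyβ : 1 ≤ y ^ β := Real.one_le_rpow hy (by linarith)
    have key : (((β-1)⁻¹ - max u 0) * y ^ β)^2 ≤ ((β-1)⁻¹ * y ^ β - u)^2 :=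
      pow_le_pow_left₀ (by positivity) h1 2
    have hnum : |y ^ β + u| ≤ (1 + |u|) * y ^ β := by
      calc |y ^ β + u| ≤ |y ^ β| + |u| := abs_add_le _ _
        _ = y ^ β + |u| := by rw [abs_of_pos (by linarith)]
        _ ≤ (1 + |u|) * y ^ β := by nlinarith [abs_nonneg u]
    rw [Real.norm_eq_abs, abs_mul, abs_of_pos (pow_pos (inv_pos.2 h2) 2), inv_pow]
    calc |y ^ β + u| * (((β-1)⁻¹ * y ^ β - u)^2)⁻¹
        ≤ ((1 + |u|) * y ^ β) * ((((β-1)⁻¹ - max u 0) * y ^ β)^2)⁻¹ := by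
          apply mul_le_mul hnum (inv_anti₀ (by positivity) key) (by positivity) (by positivity)
      _ = (1 + |u|) * (((β-1)⁻¹ - max u 0)^2)⁻¹ * y ^ (-β) := by
          have h0 : y ^ β ≠ 0 := by positivity
          rw [mul_pow, mul_inv, Real.rpow_neg hy0.le]
          have hz : y ^ β * ((y ^ β) ^ 2)⁻¹ = (y ^ β)⁻¹ := by
            rw [sq, mul_inv, ← mul_assoc, mul_inv_cancel₀ h0, one_mul]
          calc (1 + |u|) * y ^ β * ((((β-1)⁻¹ - max u 0) ^ 2)⁻¹ * ((y ^ β) ^ 2)⁻¹)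
              = (1 + |u|) * (((β-1)⁻¹ - max u 0) ^ 2)⁻¹ * (y ^ β * ((y ^ β) ^ 2)⁻¹) := by ring
            _ = (1 + |u|) * (((β-1)⁻¹ - max u 0) ^ 2)⁻¹ * (y ^ β)⁻¹ := by rw [hz]

lemma r_eval {β u : ℝ} (hβ : 1 < β) (hu : u < (β-1)⁻¹) :
    (∫ y in Ici (1:ℝ), (y ^ β + u) * (((β-1)⁻¹ * y ^ β - u)⁻¹) ^ 2)
      = ((β-1)⁻¹ - u)⁻¹ := by
  have hK := K_pos hβ hu
  set c := (β-1)⁻¹ with hc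
  have hc1 : c * (β - 1) = 1 := inv_mul_cancel₀ (ne_of_gt (by linarith))
  have hderiv : ∀ y ∈ Ici (1:ℝ),
      HasDerivAt (fun y : ℝ => -(y / (c * y ^ β - u)))
        ((y ^ β + u) * ((c * y ^ β - u)⁻¹) ^ 2) y := by
    intro y hy
    have hy0 : (0:ℝ) < y := lt_of_lt_of_le one_pos hy
    have hd : (0:ℝ) < c * y ^ β - u := denom_pos hβ hu hy
    have h1 : HasDerivAt (fun y : ℝ => c * y ^ β - u) (c * (β * y ^ (β-1))) y :=
      (((Real.hasDerivAt_rpow_const (p := β) (Or.inl hy0.ne'))).const_mul c).sub_const u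
    have h2 : HasDerivAt (fun y : ℝ => -(y / (c * y ^ β - u)))
        (-((1 * (c * y ^ β - u) - y * (c * (β * y ^ (β-1)))) / (c * y ^ β - u) ^ 2)) y :=
      ((hasDerivAt_id y).div h1 hd.ne').neg
    convert h2 using 1
    rw [Real.rpow_sub hy0, Real.rpow_one]
    have hsimp : y * (c * (β * (y ^ β / y))) = c * β * y ^ β := by
      field_simp
    simp only [id_eq, one_mul]
    rw [hsimp]
    have hnum : c * y ^ β - u - c * β * y ^ β = -(y ^ β + u) := by
      linear_combination (-(y ^ β)) * hc1
    rw [hnum, inv_pow, neg_div, neg_neg, ← div_eq_mul_inv]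
  have htend : Tendsto (fun y : ℝ => -(y / (c * y ^ β - u))) atTop (𝓝 0) := by
    apply squeeze_zero_norm' (a := fun y : ℝ => (c - max u 0)⁻¹ * y ^ (1 - β))
    · filter_upwards [Ici_mem_atTop (1:ℝ)] with y hy
      have hy0 : (0:ℝ) < y := lt_of_lt_of_le one_pos hy
      have hd : (0:ℝ) < c * y ^ β - u := denom_pos hβ hu hy
      rw [norm_neg, Real.norm_eq_abs, abs_of_pos (by positivity)]
      calc y / (c * y ^ β - u) ≤ y / ((c - max u 0) * y ^ β) :=
            div_le_div_of_nonneg_left hy0.le (by positivity) (denom_lb hβ hu hy)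
        _ = (c - max u 0)⁻¹ * y ^ (1 - β) := by
            rw [Real.rpow_sub hy0, Real.rpow_one, div_eq_mul_inv, div_eq_mul_inv, mul_inv]
            ring
    · have := (tendsto_rpow_neg_atTop (y := β - 1) (by linarith)).const_mul (c - max u 0)⁻¹
      simpa [neg_sub] using this
  rw [integral_Ici_eq_integral_Ioi,
    integral_Ioi_of_hasDerivAt_of_tendsto' hderiv
      ((int_rint hβ hu).mono Ioi_subset_Ici_self le_rfl) htend]
  simp [Real.one_rpow]

noncomputable def Ffun (β t : ℝ) : ℝ := ∫ y in Ici (1:ℝ), ((β-1)⁻¹ * y ^ β - t)⁻¹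
noncomputable def Gfun (β t : ℝ) : ℝ := ∫ y in Ici (1:ℝ), (((β-1)⁻¹ * y ^ β - t)⁻¹)^2

lemma meas_inv {β t : ℝ} (hβ : 1 < β) :
    AEStronglyMeasurable (fun y : ℝ => ((β-1)⁻¹ * y ^ β - t)⁻¹)
      (volume.restrict (Ici 1)) :=
  ((cont_denom (t := t) hβ).measurable.inv).aestronglyMeasurable

lemma inv_sq_le {β t m y : ℝ} (hβ : 1 < β) (htm : t ≤ m) (hm : m < (β-1)⁻¹) (hy : 1 ≤ y) :
    (((β-1)⁻¹ * y ^ β - t)⁻¹) ^ 2 ≤ (((β-1)⁻¹ - max m 0)^2)⁻¹ * y ^ (-(2*β)) := by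
  have hK := K_pos hβ hm
  have hy0 : (0:ℝ) < y := lt_of_lt_of_le one_pos hy
  have hyβ : 1 ≤ y ^ β := Real.one_le_rpow hy (by linarith)
  have ht : t < (β-1)⁻¹ := lt_of_le_of_lt htm hm
  have h2 := denom_pos hβ ht hy
  have h1 : ((β-1)⁻¹ - max m 0) * y ^ β ≤ (β-1)⁻¹ * y ^ β - t := by
    have := denom_lb hβ hm hy
    have hmax : max t 0 ≤ max m 0 := max_le_max htm le_rfl
    have := denom_lb hβ ht hy
    nlinarith [max_le_max htm (le_refl (0:ℝ))]
  have key : (((β-1)⁻¹ - max m 0) * y ^ β)^2 ≤ ((β-1)⁻¹ * y ^ β - t)^2 :=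
    pow_le_pow_left₀ (by positivity) h1 2
  rw [inv_pow]
  calc (((β-1)⁻¹ * y ^ β - t)^2)⁻¹ ≤ ((((β-1)⁻¹ - max m 0) * y ^ β)^2)⁻¹ :=
        inv_anti₀ (by positivity) key
    _ = (((β-1)⁻¹ - max m 0)^2)⁻¹ * y ^ (-(2*β)) := by
        rw [mul_pow, mul_inv, Real.rpow_neg hy0.le]
        congr 1
        rw [← Real.rpow_natCast (y ^ β) 2, ← Real.rpow_mul hy0.le]
        norm_num [mul_comm]

lemma hasDerivAt_F {β t₀ : ℝ} (hβ : 1 < β) (ht₀ : t₀ < (β-1)⁻¹) :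
    HasDerivAt (Ffun β) (Gfun β t₀) t₀ := by
  set c := (β-1)⁻¹ with hc
  set m := (t₀ + c)/2 with hm
  have hm' : m < c := by rw [hm]; linarith
  have ht₀m : t₀ < m := by rw [hm]; linarith
  set ε := m - t₀ with hε
  have hε0 : 0 < ε := by rw [hε]; linarith
  have hK := K_pos hβ hm'
  have := hasDerivAt_integral_of_dominated_loc_of_deriv_le (μ := volume.restrict (Ici 1))
    (F := fun t y => (c * y ^ β - t)⁻¹) (F' := fun t y => ((c * y ^ β - t)⁻¹)^2)
    (x₀ := t₀) (bound := fun y => ((c - max m 0)^2)⁻¹ * y ^ (-(2*β)))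
    (Metric.ball_mem_nhds t₀ hε0) (Eventually.of_forall fun t => meas_inv hβ) (int_inv hβ ht₀)
    (((cont_denom (t := t₀) hβ).measurable.inv.pow_const 2).aestronglyMeasurable)
    ?_ ?_ ?_
  · exact this.2
  · filter_upwards [ae_restrict_mem measurableSet_Ici] with y hy t htb
    have htm : t ≤ m := by
      rw [Real.ball_eq_Ioo] at htb
      have := htb.2; rw [hε] at this; linarith [this]
    rw [Real.norm_eq_abs, abs_of_nonneg (by positivity)]
    exact inv_sq_le hβ htm hm' hy
  · exact ((int_rpow (p := 2*β) (by linarith)).const_mul _)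
  · filter_upwards [ae_restrict_mem measurableSet_Ici] with y hy t htb
    have htm : t ≤ m := by
      rw [Real.ball_eq_Ioo] at htb
      have := htb.2; rw [hε] at this; linarith [this]
    have hd : (0:ℝ) < c * y ^ β - t := denom_pos hβ (lt_of_le_of_lt htm hm') hy
    have h1 : HasDerivAt (fun t : ℝ => c * y ^ β - t) (-1) t := by
      simpa using (hasDerivAt_id t).const_sub (c * y ^ β)
    have : HasDerivAt (fun t => (c * y ^ β - t)⁻¹) (- -1 / (c * y ^ β - t) ^ 2) t :=
      h1.inv hd.ne'
    exact this.congr_deriv (by rw [inv_pow]; field_simp)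

lemma G_pos {β t : ℝ} (hβ : 1 < β) (ht : t < (β-1)⁻¹) : 0 < Gfun β t := by
  rw [Gfun]
  refine (setIntegral_pos_iff_support_of_nonneg_ae ?_ ?_).2 ?_
  rotate_left 2
  · have hsub : Ici (1:ℝ) ⊆ Function.support (fun y => (((β-1)⁻¹ * y ^ β - t)⁻¹)^2) := by
      intro y hy
      exact (pow_pos (inv_pos.2 (denom_pos hβ ht hy)) 2).ne'
    calc (0:ENNReal) < volume (Ici (1:ℝ)) := by simp
      _ ≤ volume (Function.support (fun y => (((β-1)⁻¹ * y ^ β - t)⁻¹)^2) ∩ Ici 1) := by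
          apply measure_mono; intro y hy; exact ⟨hsub hy, hy⟩
  · filter_upwards [ae_restrict_mem measurableSet_Ici] with y hy
    positivity
  · exact int_inv_sq hβ ht

lemma F_pos {β t : ℝ} (hβ : 1 < β) (ht : t < (β-1)⁻¹) : 0 < Ffun β t := by
  rw [Ffun]
  refine (setIntegral_pos_iff_support_of_nonneg_ae ?_ ?_).2 ?_
  rotate_left 2
  · have hsub : Ici (1:ℝ) ⊆ Function.support (fun y => ((β-1)⁻¹ * y ^ β - t)⁻¹) := by
      intro y hy
      exact (inv_pos.2 (denom_pos hβ ht hy)).ne'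
    calc (0:ENNReal) < volume (Ici (1:ℝ)) := by simp
      _ ≤ volume (Function.support (fun y => ((β-1)⁻¹ * y ^ β - t)⁻¹) ∩ Ici 1) := by
          apply measure_mono; intro y hy; exact ⟨hsub hy, hy⟩
  · filter_upwards [ae_restrict_mem measurableSet_Ici] with y hy
    exact (inv_pos.2 (denom_pos hβ ht hy)).le
  · exact int_inv hβ ht

lemma F_strictMono {β : ℝ} (hβ : 1 < β) : StrictMonoOn (Ffun β) (Iio (β-1)⁻¹) := by
  apply strictMonoOn_of_deriv_pos (convex_Iio _)
  · exact fun t ht => (hasDerivAt_F hβ ht).continuousAt.continuousWithinAt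
  · intro t ht
    rw [interior_Iio] at ht
    rw [(hasDerivAt_F hβ ht).deriv]
    exact G_pos hβ ht

-- key integral identity: r t = (β-1) F t + β t G t
lemma key_identity {β t : ℝ} (hβ : 1 < β) (ht : t < (β-1)⁻¹) :
    (∫ y in Ici (1:ℝ), (y ^ β + t) * (((β-1)⁻¹ * y ^ β - t)⁻¹) ^ 2)
      = (β-1) * Ffun β t + β * t * Gfun β t := by
  have hc1 : (β-1)⁻¹ * (β - 1) = 1 := inv_mul_cancel₀ (ne_of_gt (by linarith))
  have hpt : ∀ y ∈ Ici (1:ℝ),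
      (y ^ β + t) * (((β-1)⁻¹ * y ^ β - t)⁻¹) ^ 2
        = (β-1) * ((β-1)⁻¹ * y ^ β - t)⁻¹ + (β * t) * (((β-1)⁻¹ * y ^ β - t)⁻¹) ^ 2 := by
    intro y hy
    have hd : (0:ℝ) < (β-1)⁻¹ * y ^ β - t := denom_pos hβ ht hy
    have hs : (β-1) * ((β-1)⁻¹ * y ^ β - t) + β * t = y ^ β + t := by
      linear_combination (y ^ β) * hc1
    rw [← hs, add_mul]
    congr 1
    rw [sq]
    calc (β-1) * ((β-1)⁻¹ * y ^ β - t) * (((β-1)⁻¹ * y ^ β - t)⁻¹ * ((β-1)⁻¹ * y ^ β - t)⁻¹)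
        = (β-1) * (((β-1)⁻¹ * y ^ β - t) * ((β-1)⁻¹ * y ^ β - t)⁻¹) * ((β-1)⁻¹ * y ^ β - t)⁻¹ := by
          ring
      _ = (β-1) * ((β-1)⁻¹ * y ^ β - t)⁻¹ := by rw [mul_inv_cancel₀ hd.ne', mul_one]
  rw [setIntegral_congr_fun measurableSet_Ici hpt, integral_add
    ((int_inv hβ ht).const_mul _) ((int_inv_sq hβ ht).const_mul _),
    integral_const_mul, integral_const_mul, Ffun, Gfun]

lemma F_zero {β : ℝ} (hβ : 1 < β) : Ffun β 0 = 1 := by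
  have hb0 : (0:ℝ) < β - 1 := by linarith
  have hpt : ∀ y ∈ Ici (1:ℝ), ((β-1)⁻¹ * y ^ β - 0)⁻¹ = (β - 1) * y ^ (-β) := by
    intro y hy
    have hy0 : (0:ℝ) < y := lt_of_lt_of_le one_pos hy
    rw [sub_zero, mul_inv, inv_inv, Real.rpow_neg hy0.le]
  rw [Ffun, setIntegral_congr_fun measurableSet_Ici hpt, integral_const_mul,
    integral_Ici_eq_integral_Ioi, integral_Ioi_rpow_of_lt (by linarith) one_pos]
  rw [Real.one_rpow]
  rw [show (-1 : ℝ) / (-β + 1) = (β - 1)⁻¹ by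
    rw [div_eq_inv_mul, show (-β + (1:ℝ)) = -(β - 1) by ring, inv_neg]; ring]
  exact mul_inv_cancel₀ hb0.ne'
theorem rate_function_J_properties (β : ℝ) (hβ : 1 < β)
    (τ : ℝ → ℝ) (hτlt : ∀ x > 0, τ x < (β - 1)⁻¹)
    (hτ : ∀ x > 0, (∫ y in Set.Ici (1 : ℝ), ((β - 1)⁻¹ * y ^ β - τ x)⁻¹) = x)
    (I : ℝ → ℝ)
    (hI : ∀ x, I x = -((β - 1) * x * τ x) - Real.log (1 - (β - 1) * τ x))
    (J : ℝ → ℝ) (hJ : ∀ x, J x = x * I (x ^ (β - 1)))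
    (R : ℝ → ℝ) (hR : ∀ x, R x = (β - 1) * x * τ x + I x)
    (r : ℝ → ℝ)
    (hr : ∀ u, r u = ∫ y in Set.Ici (1 : ℝ),
      (y ^ β + u) * (((β - 1)⁻¹ * y ^ β - u)⁻¹) ^ 2) :
    (∀ x > 0, 0 ≤ J x) ∧ StrictConvexOn ℝ (Set.Ioi 0) J ∧ J 1 = 0 ∧
    (∀ x > 0, HasDerivAt J (R (x ^ (β - 1))) x) ∧
    (∀ u < (β - 1)⁻¹, 0 < r u) ∧
    (∀ x > 0, deriv R x = deriv τ x * r (τ x)) := by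
  have hb0 : (0:ℝ) < β - 1 := by linarith
  have hc0 : (0:ℝ) < (β - 1)⁻¹ := inv_pos.2 hb0
  have hc1 : (β - 1)⁻¹ * (β - 1) = 1 := inv_mul_cancel₀ hb0.ne'
  have hFτ : ∀ x > 0, Ffun β (τ x) = x := fun x hx => hτ x hx
  have hFmono : StrictMonoOn (Ffun β) (Iio (β - 1)⁻¹) := F_strictMono hβ
  -- strict monotonicity of τ
  have τmono : StrictMonoOn τ (Ioi 0) := by
    intro x hx x' hx' hlt
    rcases lt_trichotomy (τ x) (τ x') with h | h | h
    · exact h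
    · exfalso
      have h1 := hFτ x hx
      have h2 := hFτ x' hx'
      rw [← h] at h2
      rw [h1] at h2
      exact absurd h2 (ne_of_lt hlt)
    · exfalso
      have := hFmono (hτlt x' hx') (hτlt x hx) h
      rw [hFτ x hx, hFτ x' hx'] at this
      exact absurd hlt (not_lt.2 this.le)
  -- continuity of τ
  have τcont : ∀ x > 0, ContinuousAt τ x := by
    intro x hx
    rw [Metric.continuousAt_iff]
    intro ε hε
    have htc : τ x < (β - 1)⁻¹ := hτlt x hx
    set ε' := min (ε/2) (((β - 1)⁻¹ - τ x)/2) with hε'def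
    have hε'0 : 0 < ε' := lt_min (by linarith) (by linarith)
    have hε'ε : ε' < ε := lt_of_le_of_lt (min_le_left _ _) (by linarith)
    have htp : τ x + ε' < (β - 1)⁻¹ := by
      have := min_le_right (ε/2) (((β - 1)⁻¹ - τ x)/2)
      rw [← hε'def] at this
      linarith
    have htm : τ x - ε' < (β - 1)⁻¹ := by linarith
    have hFl : Ffun β (τ x - ε') < x := by
      have := hFmono (mem_Iio.2 htm) (mem_Iio.2 htc) (by linarith)
      rwa [hFτ x hx] at this
    have hFr : x < Ffun β (τ x + ε') := by
      have := hFmono (mem_Iio.2 htc) (mem_Iio.2 htp) (by linarith)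
      rwa [hFτ x hx] at this
    refine ⟨min (x - Ffun β (τ x - ε')) (min (Ffun β (τ x + ε') - x) (x/2)),
      lt_min (by linarith) (lt_min (by linarith) (by linarith)), ?_⟩
    intro x' hx'
    rw [Real.dist_eq] at hx' ⊢
    have hb1 : |x' - x| < x - Ffun β (τ x - ε') := lt_of_lt_of_le hx' (min_le_left _ _)
    have hb2 : |x' - x| < Ffun β (τ x + ε') - x :=
      lt_of_lt_of_le hx' (le_trans (min_le_right _ _) (min_le_left _ _))
    have hb3 : |x' - x| < x/2 :=
      lt_of_lt_of_le hx' (le_trans (min_le_right _ _) (min_le_right _ _))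
    have habs1 := abs_lt.1 hb1
    have habs2 := abs_lt.1 hb2
    have habs3 := abs_lt.1 hb3
    have hx'0 : 0 < x' := by linarith
    have h1 : Ffun β (τ x - ε') < x' := by linarith
    have h2 : x' < Ffun β (τ x + ε') := by linarith
    have ha : τ x - ε' < τ x' := by
      by_contra hcon
      push_neg at hcon
      have := hFmono.monotoneOn (mem_Iio.2 (hτlt x' hx'0)) (mem_Iio.2 htm) hcon
      rw [hFτ x' hx'0] at this
      linarith
    have hb : τ x' < τ x + ε' := by
      by_contra hcon
      push_neg at hcon
      have := hFmono.monotoneOn (mem_Iio.2 htp) (mem_Iio.2 (hτlt x' hx'0)) hcon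
      rw [hFτ x' hx'0] at this
      linarith
    rw [abs_lt]
    constructor <;> linarith
  -- τ is differentiable
  have τderiv : ∀ x, 0 < x → HasDerivAt τ (Gfun β (τ x))⁻¹ x := by
    intro x hx
    refine HasDerivAt.of_local_left_inverse (τcont x hx) (hasDerivAt_F hβ (hτlt x hx))
      (G_pos hβ (hτlt x hx)).ne' ?_
    filter_upwards [Ioi_mem_nhds hx] with y hy
    exact hFτ y hy
  -- τ 1 = 0
  have τ1 : τ 1 = 0 := by
    have h1 : Ffun β (τ 1) = 1 := hFτ 1 one_pos
    have h0 : Ffun β 0 = 1 := F_zero hβ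
    exact hFmono.injOn (mem_Iio.2 (hτlt 1 one_pos)) (mem_Iio.2 hc0) (by rw [h1, h0])
  -- positivity of logarithm argument
  have hpos : ∀ t, t < (β - 1)⁻¹ → 0 < 1 - (β - 1) * t := by
    intro t ht
    have h := mul_lt_mul_of_pos_left ht hb0
    rw [mul_inv_cancel₀ hb0.ne'] at h
    linarith
  -- the inverse identity
  have hrc : ∀ t, t < (β - 1)⁻¹ → ((β - 1)⁻¹ - t)⁻¹ = (β - 1)/(1 - (β - 1) * t) := by
    intro t ht
    have hct : (0:ℝ) < (β - 1)⁻¹ - t := by linarith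
    have hlt := hpos t ht
    rw [eq_div_iff hlt.ne']
    have hexp : 1 - (β - 1) * t = (β - 1) * ((β - 1)⁻¹ - t) := by
      rw [mul_sub]
      rw [show (β - 1) * (β - 1)⁻¹ = 1 from mul_inv_cancel₀ hb0.ne']
    rw [hexp, mul_comm (β - 1), ← mul_assoc, inv_mul_cancel₀ hct.ne', one_mul]
  -- the key relation (β-1)/(1-(β-1)τx) = (β-1)x + βτx·G(τx)
  have hkeyrel : ∀ x, 0 < x →
      (β - 1)/(1 - (β - 1) * τ x) = (β - 1) * x + β * τ x * Gfun β (τ x) := by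
    intro x hx
    have htc := hτlt x hx
    rw [← hrc (τ x) htc, ← r_eval hβ htc, key_identity hβ htc, hFτ x hx]
  -- I has derivative τ x at x
  have Ideriv : ∀ x, 0 < x → HasDerivAt I (τ x) x := by
    intro x hx
    have htc := hτlt x hx
    have hG := G_pos hβ htc
    have hτ' := τderiv x hx
    have hlog := hpos (τ x) htc
    have hGG : Gfun β (τ x) * (Gfun β (τ x))⁻¹ = 1 := mul_inv_cancel₀ hG.ne'
    have hprod : HasDerivAt (fun y => (β - 1) * y * τ y)
        ((β - 1) * τ x + (β - 1) * x * (Gfun β (τ x))⁻¹) x := by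
      have : HasDerivAt (fun y => (β - 1) * y * τ y)
          ((β - 1) * 1 * τ x + (β - 1) * x * (Gfun β (τ x))⁻¹) x :=
        ((hasDerivAt_id x).const_mul (β - 1)).mul hτ'
      convert this using 1
      simp [mul_assoc]
    have h2 : HasDerivAt (fun y => 1 - (β - 1) * τ y) (-((β - 1) * (Gfun β (τ x))⁻¹)) x :=
      (hτ'.const_mul (β - 1)).const_sub 1
    have hlogd : HasDerivAt (fun y => Real.log (1 - (β - 1) * τ y))
        (-((β - 1) * (Gfun β (τ x))⁻¹) / (1 - (β - 1) * τ x)) x := h2.log hlog.ne'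
    have hD : HasDerivAt (fun y => -((β - 1) * y * τ y) - Real.log (1 - (β - 1) * τ y))
        (-((β - 1) * τ x + (β - 1) * x * (Gfun β (τ x))⁻¹)
          - (-((β - 1) * (Gfun β (τ x))⁻¹) / (1 - (β - 1) * τ x))) x := hprod.neg.sub hlogd
    have hIfun : I = fun y => -((β - 1) * y * τ y) - Real.log (1 - (β - 1) * τ y) := funext hI
    rw [hIfun]
    convert hD using 1
    have hkey := hkeyrel x hx
    have e1 : -((β - 1) * (Gfun β (τ x))⁻¹) / (1 - (β - 1) * τ x)
        = -((Gfun β (τ x))⁻¹ * ((β - 1) / (1 - (β - 1) * τ x))) := by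
      rw [div_eq_mul_inv, div_eq_mul_inv]; ring
    rw [e1, hkey]
    linear_combination (-(β * τ x)) * hGG
  -- J derivative
  have Jderiv : ∀ x, 0 < x → HasDerivAt J (R (x ^ (β - 1))) x := by
    intro x hx
    have hz : (0:ℝ) < x ^ (β - 1) := Real.rpow_pos_of_pos hx _
    have hid : HasDerivAt (fun y : ℝ => y ^ (β - 1)) ((β - 1) * x ^ (β - 1 - 1)) x :=
      Real.hasDerivAt_rpow_const (Or.inl hx.ne')
    have hIz : HasDerivAt (fun y : ℝ => I (y ^ (β - 1)))
        (τ (x ^ (β - 1)) * ((β - 1) * x ^ (β - 1 - 1))) x := (Ideriv _ hz).comp x hid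
    have hprod : HasDerivAt (fun y : ℝ => y * I (y ^ (β - 1)))
        (1 * I (x ^ (β - 1)) + x * (τ (x ^ (β - 1)) * ((β - 1) * x ^ (β - 1 - 1)))) x :=
      (hasDerivAt_id x).mul hIz
    have hJfun : J = fun y => y * I (y ^ (β - 1)) := funext hJ
    rw [hJfun, hR (x ^ (β - 1))]
    convert hprod using 1
    rw [show x ^ (β - 1 - 1) = x ^ (β - 1) / x from by
      rw [Real.rpow_sub hx, Real.rpow_one]]
    have hxx : x * (x ^ (β - 1) / x) = x ^ (β - 1) := by field_simp
    linear_combination (-(β - 1) * τ (x ^ (β - 1))) * hxx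
  -- values at 1
  have hI1 : I 1 = 0 := by rw [hI 1, τ1]; simp
  have hJ1 : J 1 = 0 := by rw [hJ 1, Real.one_rpow, hI1, mul_zero]
  have hR1 : R 1 = 0 := by rw [hR 1, τ1, hI1]; ring
  -- R in log form
  have hRform : ∀ z, R z = -Real.log (1 - (β - 1) * τ z) := by
    intro z; rw [hR z, hI z]; ring
  -- strict monotonicity of x ↦ R (x ^ (β-1)) on Ioi 0
  have hcomp : StrictMonoOn (fun x : ℝ => R (x ^ (β - 1))) (Ioi 0) := by
    intro x hx x' hx' hlt
    have hz : (0:ℝ) < x ^ (β - 1) := Real.rpow_pos_of_pos hx _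
    have hz' : (0:ℝ) < x' ^ (β - 1) := Real.rpow_pos_of_pos hx' _
    have hzlt : x ^ (β - 1) < x' ^ (β - 1) :=
      Real.rpow_lt_rpow (le_of_lt hx) hlt (by linarith)
    have hτltz : τ (x ^ (β - 1)) < τ (x' ^ (β - 1)) := τmono hz hz' hzlt
    simp only
    rw [hRform, hRform]
    apply neg_lt_neg
    apply Real.log_lt_log (hpos _ (hτlt _ hz'))
    have := mul_lt_mul_of_pos_left hτltz hb0
    linarith
  -- strict convexity
  have hconv : StrictConvexOn ℝ (Ioi 0) J := by
    apply StrictMonoOn.strictConvexOn_of_deriv (convex_Ioi 0)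
    · exact fun x hx => (Jderiv x hx).continuousAt.continuousWithinAt
    · rw [interior_Ioi]
      intro x hx x' hx' hlt
      rw [(Jderiv x hx).deriv, (Jderiv x' hx').deriv]
      exact hcomp hx hx' hlt
  -- nonnegativity
  have hmonoJ : MonotoneOn J (Ici 1) := by
    apply monotoneOn_of_deriv_nonneg (convex_Ici 1)
    · exact fun x hx => (Jderiv x (lt_of_lt_of_le one_pos hx)).continuousAt.continuousWithinAt
    · rw [interior_Ici]
      exact fun x hx =>
        (Jderiv x (lt_trans one_pos hx)).differentiableAt.differentiableWithinAt
    · rw [interior_Ici]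
      intro x hx
      rw [(Jderiv x (lt_trans one_pos hx)).deriv]
      have h := hcomp (mem_Ioi.2 one_pos) (mem_Ioi.2 (lt_trans one_pos hx)) hx
      simp only [Real.one_rpow] at h
      rw [hR1] at h
      exact h.le
  have hantiJ : AntitoneOn J (Ioc 0 1) := by
    apply antitoneOn_of_deriv_nonpos (convex_Ioc 0 1)
    · exact fun x hx => (Jderiv x hx.1).continuousAt.continuousWithinAt
    · rw [interior_Ioc]
      exact fun x hx => (Jderiv x hx.1).differentiableAt.differentiableWithinAt
    · rw [interior_Ioc]
      intro x hx
      rw [(Jderiv x hx.1).deriv]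
      have h := hcomp (mem_Ioi.2 hx.1) (mem_Ioi.2 one_pos) hx.2
      simp only [Real.one_rpow] at h
      rw [hR1] at h
      exact h.le
  have hnonneg : ∀ x > 0, 0 ≤ J x := by
    intro x hx
    rcases le_or_gt 1 x with h | h
    · have := hmonoJ (mem_Ici.2 le_rfl) (mem_Ici.2 h) h
      rwa [hJ1] at this
    · have := hantiJ (mem_Ioc.2 ⟨hx, h.le⟩) (mem_Ioc.2 ⟨one_pos, le_rfl⟩) h.le
      rwa [hJ1] at this
  -- positivity of r
  have hrpos : ∀ u < (β - 1)⁻¹, 0 < r u := by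
    intro u hu
    rw [hr u, r_eval hβ hu]
    exact inv_pos.2 (by linarith)
  -- derivative of R
  have hderivR : ∀ x > 0, deriv R x = deriv τ x * r (τ x) := by
    intro x hx
    have hτ' := τderiv x hx
    have htc := hτlt x hx
    have hRfun : R = fun y => -Real.log (1 - (β - 1) * τ y) := funext hRform
    have h2 : HasDerivAt (fun y => 1 - (β - 1) * τ y)
        (-((β - 1) * (Gfun β (τ x))⁻¹)) x := (hτ'.const_mul (β - 1)).const_sub 1
    have hlogd := (h2.log (hpos _ htc).ne').neg
    have hRd : HasDerivAt R
        (-(-((β - 1) * (Gfun β (τ x))⁻¹) / (1 - (β - 1) * τ x))) x := hRfun ▸ hlogd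
    rw [hRd.deriv, hτ'.deriv, hr (τ x), r_eval hβ htc, hrc (τ x) htc]
    rw [div_eq_mul_inv, div_eq_mul_inv]
    ring
  exact ⟨hnonneg, hconv, hJ1, Jderiv, hrpos, hderivR⟩
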